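/- arXiv:2205.02099 — 3 statements merged into one kernel-verified Lean document; each statement's English description precedes it below -/
import Mathlib

section
/- Let K : ℝ × Ω → ℝ≥0 be defined by K(τ,ω) = sup_{s ≤ τ} ∫_{−∞}^{0} e^{νλ₁ρ + 2|z(θ_ρ ω)| + 2σ ∫_ρ^0 z(θ_η ω) dη} ‖f(ρ+s)‖²_H dρ, where z satisfies the sublinear growth properties (Z3)–(Z4) and f is backward tempered in the sense that sup_{s≤τ} ∫_{−∞}^{s} e^{γ(ξ−s)}‖f(ξ)‖²_H dξ < ∞ for every γ > 0. Then K(τ,ω) < +∞ for all (τ,ω), and τ ↦ K(τ,ω) is nondecreasing. -/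
open Filter MeasureTheory

set_option maxHeartbeats 1000000

lemma exp_bound_aux {Ω : Type*} (ν lam σ : ℝ) (hν : 0 < ν) (hlam : 0 < lam) (hσ : 0 < σ)
    (θ : ℝ → Ω → Ω) (z : Ω → ℝ) (ω : Ω)
    (hzcont : Continuous fun r : ℝ => z (θ r ω))
    (hzgrow_bot : Tendsto (fun r : ℝ => |z (θ r ω)| / |r|) atBot (nhds 0))
    (hzavg_bot : Tendsto (fun r : ℝ => (1 / r) * ∫ ξ in (0 : ℝ)..r, z (θ ξ ω))
      atBot (nhds 0)) :
    ∃ C : ℝ, 0 ≤ C ∧ ∀ ρ ≤ (0:ℝ),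
      ν * lam * ρ + 2 * |z (θ ρ ω)| + 2 * σ * ∫ η in ρ..(0:ℝ), z (θ η ω)
        ≤ ν * lam / 2 * ρ + C := by
  set ε : ℝ := ν * lam / (8 * (1 + σ)) with hεdef
  have hε : 0 < ε := by positivity
  have h1 : ∀ᶠ r in atBot, |z (θ r ω)| / |r| < ε := hzgrow_bot.eventually_lt_const hε
  have h2 : ∀ᶠ r in atBot, |(1 / r) * ∫ ξ in (0 : ℝ)..r, z (θ ξ ω)| < ε := by
    have := hzavg_bot.eventually (eventually_abs_sub_lt 0 hε)
    simpa using this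
  obtain ⟨R', hR'⟩ := (h1.and h2).exists_forall_of_atBot
  set R : ℝ := min R' (-1) with hRdef
  have hR0 : R ≤ 0 := le_trans (min_le_right _ _) (by norm_num)
  -- decay bound for ρ ≤ R
  have hdecay : ∀ ρ ≤ R,
      ν * lam * ρ + 2 * |z (θ ρ ω)| + 2 * σ * ∫ η in ρ..(0:ℝ), z (θ η ω)
        ≤ ν * lam / 2 * ρ := by
    intro ρ hρ
    have hρR' : ρ ≤ R' := le_trans hρ (min_le_left _ _)
    have hρneg : ρ < 0 := lt_of_le_of_lt (le_trans hρ (min_le_right _ _)) (by norm_num)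
    obtain ⟨hz1, hz2⟩ := hR' ρ hρR'
    have habsρ : |ρ| = -ρ := abs_of_neg hρneg
    have hb1 : |z (θ ρ ω)| ≤ ε * (-ρ) := by
      have := (div_lt_iff₀ (by rw [habsρ]; linarith : (0:ℝ) < |ρ|)).mp hz1
      rw [habsρ] at this; linarith
    have hb2 : (∫ η in ρ..(0:ℝ), z (θ η ω)) ≤ ε * (-ρ) := by
      have heq : (∫ η in ρ..(0:ℝ), z (θ η ω)) = -(∫ η in (0:ℝ)..ρ, z (θ η ω)) :=
        intervalIntegral.integral_symm 0 ρ
      have hρne : ρ ≠ 0 := hρneg.ne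
      have hrw : (∫ ξ in (0:ℝ)..ρ, z (θ ξ ω))
          = ρ * ((1 / ρ) * ∫ ξ in (0:ℝ)..ρ, z (θ ξ ω)) := by
        rw [← mul_assoc, mul_one_div_cancel hρne, one_mul]
      have habs : |∫ ξ in (0:ℝ)..ρ, z (θ ξ ω)| ≤ |ρ| * ε := by
        rw [hrw, abs_mul]
        exact mul_le_mul_of_nonneg_left hz2.le (abs_nonneg _)
      rw [heq]
      have := (abs_le.mp habs).1
      rw [habsρ] at this
      linarith [this]
    have h1σ : (0:ℝ) < 1 + σ := by linarith
    have hεbound : 2 * ε * (1 + σ) ≤ ν * lam / 4 := by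
      rw [hεdef]
      have hne : (1 + σ) ≠ 0 := h1σ.ne'
      have : 2 * (ν * lam / (8 * (1 + σ))) * (1 + σ) = ν * lam / 4 := by
        field_simp
        ring
      linarith
    nlinarith [hb1, hb2, hσ, hρneg, mul_pos hν hlam]
  -- continuity of the exponent
  have hIcont : Continuous (fun ρ : ℝ => ∫ η in ρ..(0:ℝ), z (θ η ω)) := by
    have h := (intervalIntegral.continuous_primitive (μ := volume)
      (fun a b => hzcont.intervalIntegrable a b) 0).neg
    have heq : (fun ρ : ℝ => ∫ η in ρ..(0:ℝ), z (θ η ω))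
        = fun ρ : ℝ => -(∫ η in (0:ℝ)..ρ, z (θ η ω)) :=
      funext fun ρ => intervalIntegral.integral_symm 0 ρ
    rw [heq]; exact h
  have hφcont : Continuous (fun ρ : ℝ =>
      ν * lam * ρ + 2 * |z (θ ρ ω)| + 2 * σ * (∫ η in ρ..(0:ℝ), z (θ η ω))
        - ν * lam / 2 * ρ) := by
    apply Continuous.sub
    · exact ((continuous_const.mul continuous_id).add (continuous_const.mul hzcont.abs)).add
        (continuous_const.mul hIcont)
    · exact continuous_const.mul continuous_id
  obtain ⟨C₀, hC₀⟩ := (isCompact_Icc (a := R) (b := (0:ℝ))).exists_bound_of_continuousOn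
    hφcont.continuousOn
  refine ⟨max C₀ 0, le_max_right _ _, fun ρ hρ => ?_⟩
  rcases le_or_gt ρ R with h | h
  · have := hdecay ρ h
    have : ν * lam * ρ + 2 * |z (θ ρ ω)| + 2 * σ * ∫ η in ρ..(0:ℝ), z (θ η ω)
        ≤ ν * lam / 2 * ρ + 0 := by linarith
    exact this.trans (by linarith [le_max_right C₀ (0:ℝ)])
  · have hmem : ρ ∈ Set.Icc R 0 := ⟨h.le, hρ⟩
    have := hC₀ ρ hmem
    rw [Real.norm_eq_abs] at this
    have h2 := (abs_le.mp this).1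
    have h3 := (abs_le.mp this).2
    linarith [le_max_left C₀ (0:ℝ)]

lemma shift_int_aux (s : ℝ) (g : ℝ → ℝ) (hg : IntegrableOn g (Set.Iic s)) :
    IntegrableOn (fun ρ => g (ρ + s)) (Set.Iic 0) := by
  have mp : MeasurePreserving (· + s) (volume : Measure ℝ) volume :=
    measurePreserving_add_right volume s
  have hpre : ((· + s) ⁻¹' Set.Iic s) = Set.Iic (0:ℝ) := by ext x; simp
  have mp2 : MeasurePreserving (· + s) (volume.restrict (Set.Iic (0:ℝ)))
      (volume.restrict (Set.Iic s)) := by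
    have := mp.restrict_preimage (s := Set.Iic s) measurableSet_Iic
    rwa [hpre] at this
  exact (mp2.integrable_comp_emb (MeasurableEquiv.addRight s).measurableEmbedding).mpr hg

lemma shift_eq_aux (s : ℝ) (g : ℝ → ℝ) :
    ∫ ρ in Set.Iic (0:ℝ), g (ρ + s) = ∫ ξ in Set.Iic s, g ξ := by
  have mp : MeasurePreserving (· + s) (volume : Measure ℝ) volume :=
    measurePreserving_add_right volume s
  have hpre : ((· + s) ⁻¹' Set.Iic s) = Set.Iic (0:ℝ) := by ext x; simp
  have mp2 : MeasurePreserving (· + s) (volume.restrict (Set.Iic (0:ℝ)))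
      (volume.restrict (Set.Iic s)) := by
    have := mp.restrict_preimage (s := Set.Iic s) measurableSet_Iic
    rwa [hpre] at this
  exact mp2.integral_comp (MeasurableEquiv.addRight s).measurableEmbedding g

/-- Finiteness and monotonicity of the absorbing-radius function
`K(τ,ω) = sup_{s≤τ} ∫_{−∞}^0 e^{νλ₁ρ + 2|z(θ_ρ ω)| + 2σ∫_ρ^0 z(θ_η ω)dη} ‖f(ρ+s)‖² dρ`:
each integral is finite, the family is bounded uniformly in `s ≤ τ`,
and `τ ↦ K(τ,ω)` is nondecreasing. -/
theorem stmt13 {H Ω : Type*} [NormedAddCommGroup H]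
    (ν lam σ : ℝ) (hν : 0 < ν) (hlam : 0 < lam) (hσ : 0 < σ)
    (θ : ℝ → Ω → Ω) (z : Ω → ℝ) (ω : Ω) (f : ℝ → H)
    (hzcont : Continuous fun r : ℝ => z (θ r ω))
    (hzgrow_top : Tendsto (fun r : ℝ => |z (θ r ω)| / |r|) atTop (nhds 0))
    (hzgrow_bot : Tendsto (fun r : ℝ => |z (θ r ω)| / |r|) atBot (nhds 0))
    (hzavg_top : Tendsto (fun r : ℝ => (1 / r) * ∫ ξ in (0 : ℝ)..r, z (θ ξ ω))
      atTop (nhds 0))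
    (hzavg_bot : Tendsto (fun r : ℝ => (1 / r) * ∫ ξ in (0 : ℝ)..r, z (θ ξ ω))
      atBot (nhds 0))
    (hfloc : ∀ a b : ℝ, IntegrableOn (fun ξ => ‖f ξ‖ ^ 2) (Set.Icc a b))
    -- `f` is backward tempered:
    (hftemp_int : ∀ γ : ℝ, 0 < γ → ∀ s : ℝ,
      IntegrableOn (fun ξ => Real.exp (γ * (ξ - s)) * ‖f ξ‖ ^ 2) (Set.Iic s))
    (hftemp_bdd : ∀ γ : ℝ, 0 < γ → ∀ τ : ℝ,
      BddAbove {a : ℝ | ∃ s ≤ τ,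
        a = ∫ ξ in Set.Iic s, Real.exp (γ * (ξ - s)) * ‖f ξ‖ ^ 2}) :
    (∀ s : ℝ, IntegrableOn
      (fun ρ => Real.exp (ν * lam * ρ + 2 * |z (θ ρ ω)| +
        2 * σ * ∫ η in ρ..(0 : ℝ), z (θ η ω)) * ‖f (ρ + s)‖ ^ 2) (Set.Iic 0)) ∧
    (∀ τ : ℝ, BddAbove {a : ℝ | ∃ s ≤ τ,
      a = ∫ ρ in Set.Iic (0 : ℝ), Real.exp (ν * lam * ρ + 2 * |z (θ ρ ω)| +
        2 * σ * ∫ η in ρ..(0 : ℝ), z (θ η ω)) * ‖f (ρ + s)‖ ^ 2}) ∧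
    Monotone (fun τ : ℝ => sSup {a : ℝ | ∃ s ≤ τ,
      a = ∫ ρ in Set.Iic (0 : ℝ), Real.exp (ν * lam * ρ + 2 * |z (θ ρ ω)| +
        2 * σ * ∫ η in ρ..(0 : ℝ), z (θ η ω)) * ‖f (ρ + s)‖ ^ 2}) := by
  set γ : ℝ := ν * lam / 2 with hγdef
  have hγ : 0 < γ := by positivity
  obtain ⟨C, hC0, hEC⟩ := exp_bound_aux ν lam σ hν hlam hσ θ z ω hzcont hzgrow_bot hzavg_bot
  -- the base comparison function is integrable on Iic 0 and its integral computes
  have hbase : ∀ s : ℝ,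
      IntegrableOn (fun ρ => Real.exp (γ * ρ) * ‖f (ρ + s)‖ ^ 2) (Set.Iic 0) := by
    intro s
    have h := shift_int_aux s (fun ξ => Real.exp (γ * (ξ - s)) * ‖f ξ‖ ^ 2)
      (hftemp_int γ hγ s)
    simpa using h
  have hbase_eq : ∀ s : ℝ,
      ∫ ρ in Set.Iic (0:ℝ), Real.exp (γ * ρ) * ‖f (ρ + s)‖ ^ 2
        = ∫ ξ in Set.Iic s, Real.exp (γ * (ξ - s)) * ‖f ξ‖ ^ 2 := by
    intro s
    have h := shift_eq_aux s (fun ξ => Real.exp (γ * (ξ - s)) * ‖f ξ‖ ^ 2)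
    simpa using h
  -- continuity of the exponent
  have hIcont : Continuous (fun ρ : ℝ => ∫ η in ρ..(0:ℝ), z (θ η ω)) := by
    have h := (intervalIntegral.continuous_primitive (μ := volume)
      (fun a b => hzcont.intervalIntegrable a b) 0).neg
    have heq : (fun ρ : ℝ => ∫ η in ρ..(0:ℝ), z (θ η ω))
        = fun ρ : ℝ => -(∫ η in (0:ℝ)..ρ, z (θ η ω)) :=
      funext fun ρ => intervalIntegral.integral_symm 0 ρ
    rw [heq]; exact h
  have hEcont : Continuous (fun ρ : ℝ => Real.exp (ν * lam * ρ + 2 * |z (θ ρ ω)| +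
      2 * σ * (∫ η in ρ..(0:ℝ), z (θ η ω)) - γ * ρ)) := by
    apply Real.continuous_exp.comp
    apply Continuous.sub
    · exact ((continuous_const.mul continuous_id).add
        (continuous_const.mul hzcont.abs)).add (continuous_const.mul hIcont)
    · exact continuous_const.mul continuous_id
  -- pointwise bound
  have hbd : ∀ s : ℝ, ∀ ρ ∈ Set.Iic (0:ℝ),
      Real.exp (ν * lam * ρ + 2 * |z (θ ρ ω)| +
        2 * σ * ∫ η in ρ..(0:ℝ), z (θ η ω)) * ‖f (ρ + s)‖ ^ 2
        ≤ Real.exp C * (Real.exp (γ * ρ) * ‖f (ρ + s)‖ ^ 2) := by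
    intro s ρ hρ
    have h1 : Real.exp (ν * lam * ρ + 2 * |z (θ ρ ω)| +
        2 * σ * ∫ η in ρ..(0:ℝ), z (θ η ω)) ≤ Real.exp C * Real.exp (γ * ρ) := by
      rw [← Real.exp_add]
      refine Real.exp_le_exp.mpr ?_
      have h0 := hEC ρ hρ
      rw [hγdef]
      linarith
    rw [← mul_assoc]
    exact mul_le_mul_of_nonneg_right h1 (by positivity)
  -- measurability of the integrand
  have haesm : ∀ s : ℝ, AEStronglyMeasurable
      (fun ρ => Real.exp (ν * lam * ρ + 2 * |z (θ ρ ω)| +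
        2 * σ * ∫ η in ρ..(0:ℝ), z (θ η ω)) * ‖f (ρ + s)‖ ^ 2)
      (volume.restrict (Set.Iic (0:ℝ))) := by
    intro s
    have h := (hEcont.aestronglyMeasurable
      (μ := volume.restrict (Set.Iic (0:ℝ)))).mul (hbase s).aestronglyMeasurable
    have heq : (fun ρ : ℝ => Real.exp (ν * lam * ρ + 2 * |z (θ ρ ω)| +
        2 * σ * (∫ η in ρ..(0:ℝ), z (θ η ω)) - γ * ρ)
          * (Real.exp (γ * ρ) * ‖f (ρ + s)‖ ^ 2))
        = fun ρ => Real.exp (ν * lam * ρ + 2 * |z (θ ρ ω)| +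
          2 * σ * ∫ η in ρ..(0:ℝ), z (θ η ω)) * ‖f (ρ + s)‖ ^ 2 := by
      funext ρ
      rw [← mul_assoc, ← Real.exp_add, sub_add_cancel]
    have h2 : AEStronglyMeasurable (fun ρ : ℝ =>
        Real.exp (ν * lam * ρ + 2 * |z (θ ρ ω)| +
          2 * σ * (∫ η in ρ..(0:ℝ), z (θ η ω)) - γ * ρ)
            * (Real.exp (γ * ρ) * ‖f (ρ + s)‖ ^ 2))
        (volume.restrict (Set.Iic (0:ℝ))) := h
    rw [heq] at h2
    exact h2
  -- integrability
  have hint : ∀ s : ℝ, IntegrableOn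
      (fun ρ => Real.exp (ν * lam * ρ + 2 * |z (θ ρ ω)| +
        2 * σ * ∫ η in ρ..(0 : ℝ), z (θ η ω)) * ‖f (ρ + s)‖ ^ 2) (Set.Iic 0) := by
    intro s
    apply Integrable.mono' ((hbase s).const_mul (Real.exp C)) (haesm s)
    refine (ae_restrict_iff' measurableSet_Iic).mpr (Filter.Eventually.of_forall ?_)
    intro ρ hρ
    rw [Real.norm_eq_abs, abs_of_nonneg (by positivity)]
    exact hbd s ρ hρ
  -- integral bound
  have hIle : ∀ s : ℝ,
      (∫ ρ in Set.Iic (0:ℝ), Real.exp (ν * lam * ρ + 2 * |z (θ ρ ω)| +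
        2 * σ * ∫ η in ρ..(0 : ℝ), z (θ η ω)) * ‖f (ρ + s)‖ ^ 2)
        ≤ Real.exp C * ∫ ξ in Set.Iic s, Real.exp (γ * (ξ - s)) * ‖f ξ‖ ^ 2 := by
    intro s
    calc (∫ ρ in Set.Iic (0:ℝ), Real.exp (ν * lam * ρ + 2 * |z (θ ρ ω)| +
          2 * σ * ∫ η in ρ..(0 : ℝ), z (θ η ω)) * ‖f (ρ + s)‖ ^ 2)
        ≤ ∫ ρ in Set.Iic (0:ℝ), Real.exp C * (Real.exp (γ * ρ) * ‖f (ρ + s)‖ ^ 2) :=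
          setIntegral_mono_on (hint s) ((hbase s).const_mul (Real.exp C))
            measurableSet_Iic (hbd s)
      _ = Real.exp C * ∫ ρ in Set.Iic (0:ℝ), Real.exp (γ * ρ) * ‖f (ρ + s)‖ ^ 2 := by
          rw [MeasureTheory.integral_const_mul]
      _ = Real.exp C * ∫ ξ in Set.Iic s, Real.exp (γ * (ξ - s)) * ‖f ξ‖ ^ 2 := by
          rw [hbase_eq s]
  -- boundedness
  have hbdd : ∀ τ : ℝ, BddAbove {a : ℝ | ∃ s ≤ τ,
      a = ∫ ρ in Set.Iic (0 : ℝ), Real.exp (ν * lam * ρ + 2 * |z (θ ρ ω)| +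
        2 * σ * ∫ η in ρ..(0 : ℝ), z (θ η ω)) * ‖f (ρ + s)‖ ^ 2} := by
    intro τ
    obtain ⟨M, hM⟩ := hftemp_bdd γ hγ τ
    refine ⟨Real.exp C * M, ?_⟩
    rintro a ⟨s, hs, rfl⟩
    have h1 : (∫ ξ in Set.Iic s, Real.exp (γ * (ξ - s)) * ‖f ξ‖ ^ 2) ≤ M :=
      hM ⟨s, hs, rfl⟩
    exact (hIle s).trans (mul_le_mul_of_nonneg_left h1 (Real.exp_pos C).le)
  refine ⟨hint, hbdd, ?_⟩
  intro τ₁ τ₂ hτ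
  apply csSup_le_csSup (hbdd τ₂)
  · exact ⟨_, τ₁, le_refl τ₁, rfl⟩
  · rintro a ⟨s, hs, rfl⟩
    exact ⟨s, hs.trans hτ, rfl⟩
end

section
/- With K(τ,ω) as above and z satisfying (1/t)∫_0^t z(θ_η ω)dη → 0 and |z(θ_t ω)|/|t| → 0 as t → ±∞, and f backward tempered, one has e^{−(νλ₁/3)t} K(−1, θ_{−t}ω) → 0 as t → +∞. -/
set_option maxHeartbeats 1000000

open Filter MeasureTheory

lemma aux_sublinear (g : ℝ → ℝ) (hc : Continuous g)
    (ht : Tendsto (fun r : ℝ => |g r| / |r|) atTop (nhds 0))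
    (hb : Tendsto (fun r : ℝ => |g r| / |r|) atBot (nhds 0))
    {ε : ℝ} (hε : 0 < ε) : ∃ C : ℝ, 0 ≤ C ∧ ∀ r : ℝ, |g r| ≤ ε * |r| + C := by
  obtain ⟨R₁, hR₁⟩ := (eventually_atTop).mp (ht.eventually (gt_mem_nhds hε))
  obtain ⟨R₂, hR₂⟩ := (eventually_atBot).mp (hb.eventually (gt_mem_nhds hε))
  set R : ℝ := max 1 (max R₁ (-R₂)) with hRdef
  have hR1 : (1:ℝ) ≤ R := le_max_left _ _
  have hRR₁ : R₁ ≤ R := le_trans (le_max_left _ _) (le_max_right _ _)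
  have hRR₂ : -R₂ ≤ R := le_trans (le_max_right _ _) (le_max_right _ _)
  obtain ⟨C, hC⟩ := (isCompact_Icc (a := -R) (b := R)).exists_bound_of_continuousOn
    hc.continuousOn
  refine ⟨max C 0, le_max_right _ _, fun r => ?_⟩
  have h0C : (0:ℝ) ≤ max C 0 := le_max_right _ _
  rcases le_or_gt |r| R with h | h
  · have hr : r ∈ Set.Icc (-R) R := abs_le.mp h
    have h2 := hC r hr
    rw [Real.norm_eq_abs] at h2
    have h3 : |g r| ≤ max C 0 := h2.trans (le_max_left _ _)
    nlinarith [abs_nonneg r, hε.le]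
  · have hr0 : 0 < |r| := by linarith
    have hdiv : |g r| / |r| < ε := by
      rcases le_or_gt 0 r with h0 | h0
      · refine hR₁ r ?_
        rw [abs_of_nonneg h0] at h; linarith
      · refine hR₂ r ?_
        rw [abs_of_neg h0] at h; linarith
    rw [div_lt_iff₀ hr0] at hdiv
    linarith [hdiv]

lemma aux_mp (s : ℝ) : MeasurePreserving (fun ρ : ℝ => ρ + s)
    (volume.restrict (Set.Iic (0:ℝ))) (volume.restrict (Set.Iic s)) := by
  have h := (measurePreserving_add_right volume s).restrict_preimage
    (measurableSet_Iic (a := s))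
  have he : (fun ρ : ℝ => ρ + s) ⁻¹' Set.Iic s = Set.Iic 0 := by
    ext x; simp
  rwa [he] at h




/-- Backward decay of the absorbing radius: with
`K(τ,ω') = sup_{s≤τ} ∫_{−∞}^0 e^{νλ₁ρ + 2|z(θ_ρ ω')| + 2σ∫_ρ^0 z(θ_η ω')dη} ‖f(ρ+s)‖² dρ`,
if `z` has sublinear growth and sublinear time averages along the orbit of `ω` and
`f` is backward tempered, then `e^{−(νλ₁/3)t} K(−1, θ_{−t}ω) → 0` as `t → +∞`. -/
theorem stmt14 {H Ω : Type*} [NormedAddCommGroup H]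
    (ν lam σ : ℝ) (hν : 0 < ν) (hlam : 0 < lam) (hσ : 0 < σ)
    (θ : ℝ → Ω → Ω) (hθ : ∀ a b : ℝ, ∀ x : Ω, θ a (θ b x) = θ (a + b) x)
    (z : Ω → ℝ) (ω : Ω) (f : ℝ → H)
    (hzcont : Continuous fun r : ℝ => z (θ r ω))
    (hzgrow_top : Tendsto (fun r : ℝ => |z (θ r ω)| / |r|) atTop (nhds 0))
    (hzgrow_bot : Tendsto (fun r : ℝ => |z (θ r ω)| / |r|) atBot (nhds 0))
    (hzavg_top : Tendsto (fun r : ℝ => (1 / r) * ∫ ξ in (0 : ℝ)..r, z (θ ξ ω))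
      atTop (nhds 0))
    (hzavg_bot : Tendsto (fun r : ℝ => (1 / r) * ∫ ξ in (0 : ℝ)..r, z (θ ξ ω))
      atBot (nhds 0))
    (hfloc : ∀ a b : ℝ, IntegrableOn (fun ξ => ‖f ξ‖ ^ 2) (Set.Icc a b))
    -- `f` is backward tempered:
    (hftemp_int : ∀ γ : ℝ, 0 < γ → ∀ s : ℝ,
      IntegrableOn (fun ξ => Real.exp (γ * (ξ - s)) * ‖f ξ‖ ^ 2) (Set.Iic s))
    (hftemp_bdd : ∀ γ : ℝ, 0 < γ → ∀ τ : ℝ,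
      BddAbove {a : ℝ | ∃ s ≤ τ,
        a = ∫ ξ in Set.Iic s, Real.exp (γ * (ξ - s)) * ‖f ξ‖ ^ 2})
    -- `K(τ, ω')`
    (K : ℝ → Ω → ℝ)
    (hK : ∀ (τ : ℝ) (ω' : Ω), K τ ω' = sSup {a : ℝ | ∃ s ≤ τ,
      a = ∫ ρ in Set.Iic (0 : ℝ), Real.exp (ν * lam * ρ + 2 * |z (θ ρ ω')| +
        2 * σ * ∫ η in ρ..(0 : ℝ), z (θ η ω')) * ‖f (ρ + s)‖ ^ 2}) :
    Tendsto (fun t : ℝ => Real.exp (-(ν * lam / 3) * t) * K (-1) (θ (-t) ω))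
      atTop (nhds 0) := by
  have hγ : (0:ℝ) < ν * lam / 2 := by positivity
  have hden : (0:ℝ) < 8 * (1 + 2 * σ) := by linarith
  set γ : ℝ := ν * lam / 2 with hγdef
  set ε : ℝ := ν * lam / (8 * (1 + 2 * σ)) with hεdef
  have hε : 0 < ε := div_pos (by positivity) hden
  have hεeq : 8 * ε * (1 + 2 * σ) = ν * lam := by
    rw [hεdef]; field_simp
  obtain ⟨C₁, hC₁0, hC₁⟩ := aux_sublinear _ hzcont hzgrow_top hzgrow_bot hε
  set Z : ℝ → ℝ := fun r => ∫ η in (0:ℝ)..r, z (θ η ω) with hZdef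
  have hZcont : Continuous Z :=
    intervalIntegral.continuous_primitive (fun a b => hzcont.intervalIntegrable a b) 0
  have habs : ∀ r : ℝ, r ≠ 0 → |(1/r) * Z r| = |Z r| / |r| := by
    intro r hr
    rw [abs_mul, abs_one_div, one_div, inv_mul_eq_div]
  have hZt : Tendsto (fun r : ℝ => |Z r| / |r|) atTop (nhds 0) := by
    have h1 : Tendsto (fun r : ℝ => |(1/r) * Z r|) atTop (nhds 0) := by
      have h2 : Tendsto (fun r : ℝ => (1/r) * Z r) atTop (nhds 0) := hzavg_top
      simpa using h2.abs
    refine h1.congr' ?_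
    filter_upwards [eventually_ne_atTop (0:ℝ)] with r hr
    exact habs r hr
  have hZb : Tendsto (fun r : ℝ => |Z r| / |r|) atBot (nhds 0) := by
    have h1 : Tendsto (fun r : ℝ => |(1/r) * Z r|) atBot (nhds 0) := by
      have h2 : Tendsto (fun r : ℝ => (1/r) * Z r) atBot (nhds 0) := hzavg_bot
      simpa using h2.abs
    refine h1.congr' ?_
    filter_upwards [eventually_ne_atBot (0:ℝ)] with r hr
    exact habs r hr
  obtain ⟨C₂, hC₂0, hC₂⟩ := aux_sublinear Z hZcont hZt hZb hε
  set C₀ : ℝ := 2 * C₁ + 4 * σ * C₂ with hC₀def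
  obtain ⟨M, hM⟩ := hftemp_bdd γ hγ (-1)
  have hMJ : ∀ s : ℝ, s ≤ -1 →
      (∫ ξ in Set.Iic s, Real.exp (γ * (ξ - s)) * ‖f ξ‖ ^ 2) ≤ M := by
    intro s hs
    exact hM ⟨s, hs, rfl⟩
  have hM0 : 0 ≤ M := by
    refine le_trans ?_ (hMJ (-1) le_rfl)
    exact setIntegral_nonneg measurableSet_Iic (fun ξ _ => by positivity)
  have key : ∀ t : ℝ, 0 ≤ t →
      K (-1) (θ (-t) ω) ≤ Real.exp (ν * lam / 4 * t + C₀) * M ∧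
      0 ≤ K (-1) (θ (-t) ω) := by
    intro t ht
    have hexp : ∀ ρ : ℝ, ρ ≤ 0 →
        ν * lam * ρ + 2 * |z (θ ρ (θ (-t) ω))| +
          2 * σ * ∫ η in ρ..(0:ℝ), z (θ η (θ (-t) ω))
        ≤ γ * ρ + (ν * lam / 4 * t + C₀) := by
      intro ρ hρ
      have e1 : z (θ ρ (θ (-t) ω)) = z (θ (ρ - t) ω) := by
        rw [hθ, ← sub_eq_add_neg]
      have e2 : (∫ η in ρ..(0:ℝ), z (θ η (θ (-t) ω))) = Z (-t) - Z (ρ - t) := by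
        have hco : ∀ η : ℝ, z (θ η (θ (-t) ω)) = z (θ (η - t) ω) := by
          intro η; rw [hθ, ← sub_eq_add_neg]
        rw [intervalIntegral.integral_congr (g := fun η => z (θ (η - t) ω))
          (fun η _ => hco η)]
        rw [intervalIntegral.integral_comp_sub_right (fun x => z (θ x ω)) t, zero_sub]
        exact (intervalIntegral.integral_interval_sub_left
          (hzcont.intervalIntegrable 0 (-t)) (hzcont.intervalIntegrable 0 (ρ - t))).symm
      rw [e1, e2]
      have habs1 : |ρ - t| ≤ -ρ + t := by
        calc |ρ - t| ≤ |ρ| + |t| := abs_sub ρ t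
        _ = -ρ + t := by rw [abs_of_nonpos hρ, abs_of_nonneg ht]
      have b1 : |z (θ (ρ - t) ω)| ≤ ε * (-ρ + t) + C₁ := by
        have := hC₁ (ρ - t)
        nlinarith [hε.le]
      have b2 : |Z (-t)| ≤ ε * t + C₂ := by
        have h := hC₂ (-t)
        rwa [abs_neg, abs_of_nonneg ht] at h
      have b3 : |Z (ρ - t)| ≤ ε * (-ρ + t) + C₂ := by
        have := hC₂ (ρ - t)
        nlinarith [hε.le]
      have hZsum : Z (-t) - Z (ρ - t) ≤ (ε * t + C₂) + (ε * (-ρ + t) + C₂) := by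
        have h4 := le_abs_self (Z (-t))
        have h5 := neg_abs_le (Z (ρ - t))
        linarith
      have h6 : 2 * σ * (Z (-t) - Z (ρ - t)) ≤
          2 * σ * ((ε * t + C₂) + (ε * (-ρ + t) + C₂)) :=
        mul_le_mul_of_nonneg_left hZsum (by positivity)
      have h7 : (0:ℝ) ≤ (ν * lam / 4 + 2 * σ * ε) * (-ρ) := by
        apply mul_nonneg _ (by linarith)
        positivity
      have h8 : γ = ν * lam / 2 := hγdef
      nlinarith [hεeq, h6, b1, h7, le_abs_self (z (θ (ρ - t) ω)),
        mul_nonneg hε.le ht]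
    -- bound each element of the sup set
    have helt : ∀ s : ℝ, s ≤ -1 →
        (∫ ρ in Set.Iic (0:ℝ), Real.exp (ν * lam * ρ + 2 * |z (θ ρ (θ (-t) ω))| +
          2 * σ * ∫ η in ρ..(0:ℝ), z (θ η (θ (-t) ω))) * ‖f (ρ + s)‖ ^ 2)
        ≤ Real.exp (ν * lam / 4 * t + C₀) * M := by
      intro s hs
      have hφint : IntegrableOn (fun ξ => Real.exp (γ * (ξ - s)) * ‖f ξ‖ ^ 2)
        (Set.Iic s) := hftemp_int γ hγ s
      have hmp := aux_mp s
      have hemb : MeasurableEmbedding (fun ρ : ℝ => ρ + s) :=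
        (MeasurableEquiv.addRight s).measurableEmbedding
      have hdom0 := (hmp.integrable_comp_emb hemb).mpr hφint
      have hdom : Integrable (fun ρ : ℝ => Real.exp (γ * (ρ + s - s)) * ‖f (ρ + s)‖ ^ 2)
          (volume.restrict (Set.Iic (0:ℝ))) := hdom0
      have hint_eq : ∫ ρ in Set.Iic (0:ℝ), Real.exp (γ * (ρ + s - s)) * ‖f (ρ + s)‖ ^ 2
          = ∫ ξ in Set.Iic s, Real.exp (γ * (ξ - s)) * ‖f ξ‖ ^ 2 :=
        hmp.integral_comp hemb (fun ξ => Real.exp (γ * (ξ - s)) * ‖f ξ‖ ^ 2)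
      have hpt : ∀ ρ ∈ Set.Iic (0:ℝ),
          Real.exp (ν * lam * ρ + 2 * |z (θ ρ (θ (-t) ω))| +
            2 * σ * ∫ η in ρ..(0:ℝ), z (θ η (θ (-t) ω))) * ‖f (ρ + s)‖ ^ 2
          ≤ Real.exp (ν * lam / 4 * t + C₀) *
            (Real.exp (γ * (ρ + s - s)) * ‖f (ρ + s)‖ ^ 2) := by
        intro ρ hρ
        have h1 := hexp ρ hρ
        have h2 : Real.exp (ν * lam * ρ + 2 * |z (θ ρ (θ (-t) ω))| +
            2 * σ * ∫ η in ρ..(0:ℝ), z (θ η (θ (-t) ω)))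
            ≤ Real.exp (ν * lam / 4 * t + C₀) * Real.exp (γ * (ρ + s - s)) := by
          rw [← Real.exp_add]
          apply Real.exp_le_exp.mpr
          have h3 : γ * (ρ + s - s) = γ * ρ := by ring
          rw [h3]; linarith
        calc Real.exp (ν * lam * ρ + 2 * |z (θ ρ (θ (-t) ω))| +
              2 * σ * ∫ η in ρ..(0:ℝ), z (θ η (θ (-t) ω))) * ‖f (ρ + s)‖ ^ 2
            ≤ (Real.exp (ν * lam / 4 * t + C₀) * Real.exp (γ * (ρ + s - s))) *
              ‖f (ρ + s)‖ ^ 2 := by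
              apply mul_le_mul_of_nonneg_right h2 (by positivity)
          _ = Real.exp (ν * lam / 4 * t + C₀) *
              (Real.exp (γ * (ρ + s - s)) * ‖f (ρ + s)‖ ^ 2) := by ring
      calc (∫ ρ in Set.Iic (0:ℝ), Real.exp (ν * lam * ρ + 2 * |z (θ ρ (θ (-t) ω))| +
              2 * σ * ∫ η in ρ..(0:ℝ), z (θ η (θ (-t) ω))) * ‖f (ρ + s)‖ ^ 2)
          ≤ ∫ ρ in Set.Iic (0:ℝ), Real.exp (ν * lam / 4 * t + C₀) *
              (Real.exp (γ * (ρ + s - s)) * ‖f (ρ + s)‖ ^ 2) := by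
            apply integral_mono_of_nonneg
            · exact Eventually.of_forall (fun ρ => by positivity)
            · exact hdom.const_mul _
            · exact (ae_restrict_iff' measurableSet_Iic).mpr (Eventually.of_forall hpt)
        _ = Real.exp (ν * lam / 4 * t + C₀) *
            ∫ ρ in Set.Iic (0:ℝ), Real.exp (γ * (ρ + s - s)) * ‖f (ρ + s)‖ ^ 2 :=
            integral_const_mul _ _
        _ = Real.exp (ν * lam / 4 * t + C₀) *
            ∫ ξ in Set.Iic s, Real.exp (γ * (ξ - s)) * ‖f ξ‖ ^ 2 := by rw [hint_eq]
        _ ≤ Real.exp (ν * lam / 4 * t + C₀) * M :=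
            mul_le_mul_of_nonneg_left (hMJ s hs) (Real.exp_pos _).le
    rw [hK]
    have hne : {a : ℝ | ∃ s ≤ (-1:ℝ),
        a = ∫ ρ in Set.Iic (0:ℝ), Real.exp (ν * lam * ρ + 2 * |z (θ ρ (θ (-t) ω))| +
          2 * σ * ∫ η in ρ..(0:ℝ), z (θ η (θ (-t) ω))) * ‖f (ρ + s)‖ ^ 2}.Nonempty :=
      ⟨_, -1, le_refl _, rfl⟩
    have hub : ∀ a ∈ {a : ℝ | ∃ s ≤ (-1:ℝ),
        a = ∫ ρ in Set.Iic (0:ℝ), Real.exp (ν * lam * ρ + 2 * |z (θ ρ (θ (-t) ω))| +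
          2 * σ * ∫ η in ρ..(0:ℝ), z (θ η (θ (-t) ω))) * ‖f (ρ + s)‖ ^ 2},
        a ≤ Real.exp (ν * lam / 4 * t + C₀) * M := by
      rintro a ⟨s, hs, rfl⟩
      exact helt s hs
    refine ⟨csSup_le hne hub, ?_⟩
    have h0 : (0:ℝ) ≤ ∫ ρ in Set.Iic (0:ℝ),
        Real.exp (ν * lam * ρ + 2 * |z (θ ρ (θ (-t) ω))| +
          2 * σ * ∫ η in ρ..(0:ℝ), z (θ η (θ (-t) ω))) * ‖f (ρ + (-1))‖ ^ 2 :=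
      setIntegral_nonneg measurableSet_Iic (fun ρ _ => by positivity)
    exact h0.trans (le_csSup ⟨_, hub⟩ ⟨-1, le_refl _, rfl⟩)
  -- final squeeze
  have hB : Tendsto (fun t : ℝ => Real.exp C₀ * M * Real.exp (-(ν * lam / 12) * t))
      atTop (nhds 0) := by
    have h1 : Tendsto (fun t : ℝ => -(ν * lam / 12) * t) atTop atBot := by
      rw [tendsto_const_mul_atBot_of_neg (neg_neg_of_pos (by positivity : (0:ℝ) < ν * lam / 12))]
      exact tendsto_id
    have h2 : Tendsto (fun t : ℝ => Real.exp (-(ν * lam / 12) * t)) atTop (nhds 0) :=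
      Real.tendsto_exp_atBot.comp h1
    simpa using h2.const_mul (Real.exp C₀ * M)
  apply tendsto_of_tendsto_of_tendsto_of_le_of_le' tendsto_const_nhds hB
  · filter_upwards [eventually_ge_atTop (0:ℝ)] with t ht
    exact mul_nonneg (Real.exp_pos _).le (key t ht).2
  · filter_upwards [eventually_ge_atTop (0:ℝ)] with t ht
    calc Real.exp (-(ν * lam / 3) * t) * K (-1) (θ (-t) ω)
        ≤ Real.exp (-(ν * lam / 3) * t) * (Real.exp (ν * lam / 4 * t + C₀) * M) :=
          mul_le_mul_of_nonneg_left (key t ht).1 (Real.exp_pos _).le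
      _ = Real.exp (-(ν * lam / 3) * t + (ν * lam / 4 * t + C₀)) * M := by
          rw [← mul_assoc, ← Real.exp_add]
      _ = Real.exp C₀ * M * Real.exp (-(ν * lam / 12) * t) := by
          rw [mul_right_comm, ← Real.exp_add]
          congr 2
          ring
end

section
/- Assume y, g, h : [t₀, t₀+2] → ℝ≥0 satisfy y' ≤ g y + h a.e., ∫_{t₀}^{t₀+2} y(s) ds ≤ a₁, ∫_{t₀}^{t₀+2} g(s) ds ≤ a₂, ∫_{t₀}^{t₀+2} h(s) ds ≤ a₃ (with y absolutely continuous, g, h integrable). Then for all t ∈ [t₀+1, t₀+2], y(t) ≤ (a₁ + a₃) e^{a₂} (uniform Gronwall lemma, with r = 1). -/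
open MeasureTheory

section UGronAuxSection
open Set

namespace UGronAux

/-- Integrability of `g * F^k` on subintervals. -/
lemma int_gFk {s T : ℝ} {g : ℝ → ℝ} (hg : IntegrableOn g (Ioc s T))
    (hFc : ContinuousOn (fun x => ∫ v in Ioc s x, g v) (Icc s T))
    {u : ℝ} (hu : u ∈ Icc s T) (k : ℕ) :
    IntegrableOn (fun v => g v * (∫ w in Ioc s v, g w) ^ k) (Ioc s u) := by
  have hsub : Ioc s u ⊆ Ioc s T := Ioc_subset_Ioc le_rfl hu.2
  have hgi : IntegrableOn g (Ioc s u) := hg.mono_set hsub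
  have hmeas : AEStronglyMeasurable (fun v => (∫ w in Ioc s v, g w) ^ k)
      (volume.restrict (Ioc s u)) := by
    have : ContinuousOn (fun v => (∫ w in Ioc s v, g w) ^ k) (Ioc s u) :=
      (hFc.mono (hsub.trans Ioc_subset_Icc_self)).pow k
    exact this.aestronglyMeasurable measurableSet_Ioc
  obtain ⟨C, hC⟩ : ∃ C, ∀ x ∈ Icc s T, ‖(∫ w in Ioc s x, g w) ^ k‖ ≤ C := by
    rcases (isCompact_Icc.image_of_continuousOn (hFc.pow k)).isBounded.subset_closedBall 0
      with ⟨C, hC⟩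
    exact ⟨C, fun x hx => by
      simpa [Real.norm_eq_abs, dist_zero_right] using
        mem_closedBall_iff_norm.mp (hC ⟨x, hx, rfl⟩) ⟩
  have h2 : Integrable (fun v => (∫ w in Ioc s v, g w) ^ k * g v)
      (volume.restrict (Ioc s u)) := by
    refine Integrable.bdd_mul (c := C) hgi hmeas ?_
    filter_upwards [ae_restrict_mem measurableSet_Ioc] with x hx
    exact hC x (Ioc_subset_Icc_self (hsub hx))
  exact h2.congr (Filter.Eventually.of_forall fun v => mul_comm _ _)

/-- The key identity: `∫_{(s,u]} g F^k = F(u)^{k+1}/(k+1)` where `F(v) = ∫_{(s,v]} g`. -/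
lemma key_identity {s T : ℝ} {g : ℝ → ℝ} (hg : IntegrableOn g (Ioc s T))
    (hFc : ContinuousOn (fun x => ∫ v in Ioc s x, g v) (Icc s T)) (k : ℕ) :
    ∀ u ∈ Icc s T, ∫ v in Ioc s u, g v * (∫ w in Ioc s v, g w) ^ k
      = (∫ v in Ioc s u, g v) ^ (k + 1) / (k + 1) := by
  induction k with
  | zero =>
    intro u hu
    simp
  | succ k IH =>
    intro u hu
    set F : ℝ → ℝ := fun x => ∫ v in Ioc s x, g v with hF
    have hsub : Ioc s u ⊆ Ioc s T := Ioc_subset_Ioc le_rfl hu.2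
    set A : Set ℝ := Ioc s u with hA
    have hAm : MeasurableSet A := measurableSet_Ioc
    set ψ : ℝ → ℝ → ℝ := fun v w =>
      ({p : ℝ × ℝ | p.2 ≤ p.1}.indicator (fun p => g p.1 * F p.1 ^ k * g p.2) (v, w)) with hψ
    -- Step 1 : inner integral in w
    have step1 : ∀ v ∈ A, (∫ w in A, ψ v w) = g v * F v ^ (k + 1) := by
      intro v hv
      have h1 : ∀ w : ℝ, ψ v w = (Iic v).indicator (fun w => g v * F v ^ k * g w) w := by
        intro w
        simp only [hψ, Set.indicator_apply, Set.mem_setOf_eq, Set.mem_Iic]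
      simp_rw [h1]
      rw [integral_indicator measurableSet_Iic, Measure.restrict_restrict measurableSet_Iic,
        inter_comm, hA, Ioc_inter_Iic, min_eq_right hv.2, integral_const_mul]
      rw [pow_succ]
      show g v * F v ^ k * F v = g v * (F v ^ k * F v)
      ring
    -- Step 2 : integrability on the product
    have hgA : IntegrableOn g A := hg.mono_set hsub
    have step2 : Integrable (Function.uncurry ψ)
        ((volume.restrict A).prod (volume.restrict A)) := by
      have hprod : Integrable (fun z : ℝ × ℝ => g z.1 * g z.2)
          ((volume.restrict A).prod (volume.restrict A)) := hgA.mul_prod hgA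
      obtain ⟨C, hC0, hC⟩ : ∃ C, 0 ≤ C ∧ ∀ x ∈ Icc s T, ‖F x ^ k‖ ≤ C := by
        rcases (isCompact_Icc.image_of_continuousOn (hFc.pow k)).isBounded.subset_closedBall 0
          with ⟨C, hC⟩
        refine ⟨max C 0, le_max_right _ _, fun x hx => le_trans ?_ (le_max_left _ _)⟩
        simpa [dist_zero_right] using mem_closedBall_iff_norm.mp (hC ⟨x, hx, rfl⟩)
      have hFm : AEStronglyMeasurable (fun x : ℝ => F x ^ k) (volume.restrict A) :=
        ((hFc.mono (hsub.trans Ioc_subset_Icc_self)).pow k).aestronglyMeasurable hAm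
      have hgm : AEStronglyMeasurable g (volume.restrict A) := hgA.aestronglyMeasurable
      have hmeas : AEStronglyMeasurable (Function.uncurry ψ)
          ((volume.restrict A).prod (volume.restrict A)) := by
        have hsetm : MeasurableSet {p : ℝ × ℝ | p.2 ≤ p.1} :=
          (isClosed_le continuous_snd continuous_fst).measurableSet
        have : AEStronglyMeasurable (fun p : ℝ × ℝ => g p.1 * F p.1 ^ k * g p.2)
            ((volume.restrict A).prod (volume.restrict A)) :=
          (hgm.comp_fst.mul hFm.comp_fst).mul hgm.comp_snd
        exact this.indicator hsetm
      refine Integrable.mono' (hprod.norm.const_mul C) hmeas ?_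
      rw [Measure.prod_restrict]
      filter_upwards [ae_restrict_mem (hAm.prod hAm)] with p hp
      have hp1 : p.1 ∈ Icc s T := Ioc_subset_Icc_self (hsub hp.1)
      calc ‖Function.uncurry ψ p‖ ≤ ‖g p.1 * F p.1 ^ k * g p.2‖ := by
            rw [Function.uncurry]
            exact norm_indicator_le_norm_self _ _
        _ ≤ C * ‖g p.1 * g p.2‖ := by
            rw [norm_mul, norm_mul, norm_mul]
            calc ‖g p.1‖ * ‖F p.1 ^ k‖ * ‖g p.2‖ ≤ ‖g p.1‖ * C * ‖g p.2‖ := by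
                  have := hC p.1 hp1
                  gcongr
              _ = C * (‖g p.1‖ * ‖g p.2‖) := by ring
    -- Step 3 : swap
    have step3 : (∫ v in A, g v * F v ^ (k + 1)) = ∫ w in A, ∫ v in A, ψ v w := by
      rw [← integral_integral_swap step2]
      exact (setIntegral_congr_fun hAm fun v hv => (step1 v hv).symm)
    -- Step 4 : inner integral in v
    have step4 : ∀ w ∈ A, (∫ v in A, ψ v w)
        = g w * (F u ^ (k + 1) / (k + 1) - F w ^ (k + 1) / (k + 1)) := by
      intro w hw
      have h1 : ∀ v : ℝ, ψ v w = (Ici w).indicator (fun v => g v * F v ^ k * g w) v := by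
        intro v
        simp only [hψ, Set.indicator_apply, Set.mem_setOf_eq, Set.mem_Ici]
      simp_rw [h1]
      rw [integral_indicator measurableSet_Ici, Measure.restrict_restrict measurableSet_Ici]
      have hset : Ici w ∩ A = Icc w u := by
        rw [hA]
        ext x
        constructor
        · rintro ⟨h1', h2'⟩; exact ⟨h1', h2'.2⟩
        · rintro ⟨h1', h2'⟩; exact ⟨h1', lt_of_lt_of_le hw.1 h1', h2'⟩
      rw [hset, integral_Icc_eq_integral_Ioc]
      have hwu : w ≤ u := hw.2
      have hsw : s ≤ w := le_of_lt hw.1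
      have hsplit : (∫ v in Ioc s w, g v * F v ^ k) + (∫ v in Ioc w u, g v * F v ^ k)
          = ∫ v in Ioc s u, g v * F v ^ k := by
        rw [← setIntegral_union (Ioc_disjoint_Ioc_of_le le_rfl) measurableSet_Ioc
          ((int_gFk hg hFc hu k).mono_set (Ioc_subset_Ioc le_rfl hwu))
          ((int_gFk hg hFc hu k).mono_set (Ioc_subset_Ioc hsw le_rfl)),
          Ioc_union_Ioc_eq_Ioc hsw hwu]
      have hIHu := IH u hu
      have hIHw := IH w ⟨hsw, hwu.trans hu.2⟩
      have hval : (∫ v in Ioc w u, g v * F v ^ k)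
          = F u ^ (k + 1) / (k + 1) - F w ^ (k + 1) / (k + 1) := by
        rw [hIHu, hIHw] at hsplit
        linarith
      rw [integral_mul_const, hval]
      ring
    -- Step 5 : combine
    have hint1 : IntegrableOn (fun w => g w * F w ^ (k + 1)) A := int_gFk hg hFc hu (k + 1)
    have step5 : (∫ w in A, ∫ v in A, ψ v w)
        = (F u ^ (k + 1) * F u - (∫ v in A, g v * F v ^ (k + 1))) / (k + 1) := by
      rw [setIntegral_congr_fun hAm step4]
      have h2 : (∫ w in A, g w * (F u ^ (k + 1) / (k + 1) - F w ^ (k + 1) / (k + 1)))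
          = ∫ w in A, ((F u ^ (k + 1) / (k + 1)) * g w - (g w * F w ^ (k + 1)) / (k + 1)) := by
        apply setIntegral_congr_fun hAm
        intro w _
        ring
      rw [h2, integral_sub (hgA.const_mul _) (hint1.div_const _),
        integral_const_mul, integral_div]
      have hFu : F u = ∫ v in A, g v := rfl
      rw [← hFu]
      ring
    have hk1 : ((k : ℝ) + 1) ≠ 0 := by positivity
    set X := ∫ v in A, g v * F v ^ (k + 1) with hXdef
    have hEq : X = (F u ^ (k + 1) * F u - X) / ((k : ℝ) + 1) := by
      exact step3.trans step5
    have hcast : ((k + 1 : ℕ) : ℝ) + 1 = (k : ℝ) + 2 := by push_cast; ring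
    show X = F u ^ (k + 1 + 1) / (((k + 1 : ℕ) : ℝ) + 1)
    rw [hcast, pow_succ, eq_div_iff (by positivity : ((k : ℝ) + 2) ≠ 0)]
    have hXk : X * ((k : ℝ) + 1) = F u ^ (k + 1) * F u - X := by
      conv_lhs => rw [hEq]
      exact div_mul_cancel₀ _ hk1
    linarith

end UGronAux

namespace UGronAux2
open UGronAux

/-- Integral form of Gronwall's inequality with variable coefficient. -/
lemma gronwall {s T : ℝ} (hsT : s ≤ T) {c : ℝ} (hc : 0 ≤ c) {y g : ℝ → ℝ}
    (hyc : ContinuousOn y (Icc s T))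
    (hg : IntegrableOn g (Ioc s T)) (hg0 : ∀ v ∈ Ioc s T, 0 ≤ g v)
    (hle : ∀ u ∈ Icc s T, y u ≤ c + ∫ v in Ioc s u, g v * y v) :
    y T ≤ c * Real.exp (∫ v in Ioc s T, g v) := by
  set F : ℝ → ℝ := fun x => ∫ v in Ioc s x, g v with hFdef
  have hFc : ContinuousOn F (Icc s T) :=
    intervalIntegral.continuousOn_primitive ((integrableOn_Icc_iff_integrableOn_Ioc).mpr hg)
  -- a uniform bound on y
  obtain ⟨M, hM0, hM, hMn⟩ : ∃ M, 0 ≤ M ∧ (∀ u ∈ Icc s T, y u ≤ M) ∧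
      (∀ u ∈ Icc s T, ‖y u‖ ≤ M) := by
    rcases (isCompact_Icc.image_of_continuousOn hyc).isBounded.subset_closedBall 0
      with ⟨C, hC⟩
    refine ⟨max C 0, le_max_right _ _, fun u hu => ?_, fun u hu => ?_⟩
    · have := mem_closedBall_iff_norm.mp (hC ⟨u, hu, rfl⟩)
      rw [sub_zero, Real.norm_eq_abs] at this
      exact le_trans (le_abs_self _) (le_trans this (le_max_left _ _))
    · have := mem_closedBall_iff_norm.mp (hC ⟨u, hu, rfl⟩)
      rw [sub_zero] at this
      exact le_trans this (le_max_left _ _)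
  -- integrability of g * y
  have hgy : IntegrableOn (fun v => g v * y v) (Ioc s T) := by
    have h2 : Integrable (fun v => y v * g v) (volume.restrict (Ioc s T)) := by
      refine Integrable.bdd_mul (c := M) hg
        ((hyc.mono Ioc_subset_Icc_self).aestronglyMeasurable measurableSet_Ioc) ?_
      filter_upwards [ae_restrict_mem measurableSet_Ioc] with x hx
      exact hMn x (Ioc_subset_Icc_self hx)
    exact h2.congr (Filter.Eventually.of_forall fun v => mul_comm _ _)
  have hF0 : ∀ u ∈ Icc s T, 0 ≤ F u := by
    intro u hu
    exact setIntegral_nonneg measurableSet_Ioc fun v hv =>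
      hg0 v (Ioc_subset_Ioc le_rfl hu.2 hv)
  -- main induction
  have main : ∀ k : ℕ, ∀ u ∈ Icc s T,
      y u ≤ c * (∑ j ∈ Finset.range (k + 1), F u ^ j / (j.factorial : ℝ))
        + M * F u ^ (k + 1) / ((k + 1).factorial : ℝ) := by
    intro k
    induction k with
    | zero =>
      intro u hu
      have h1 : (∫ v in Ioc s u, g v * y v) ≤ ∫ v in Ioc s u, g v * M := by
        refine setIntegral_mono_on (hgy.mono_set (Ioc_subset_Ioc le_rfl hu.2))
          ((hg.mono_set (Ioc_subset_Ioc le_rfl hu.2)).mul_const M) measurableSet_Ioc ?_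
        intro v hv
        have hvI : v ∈ Icc s T := ⟨le_of_lt hv.1, hv.2.trans hu.2⟩
        exact mul_le_mul_of_nonneg_left (hM v hvI) (hg0 v (Ioc_subset_Ioc le_rfl hu.2 hv))
      rw [integral_mul_const] at h1
      have h2 := hle u hu
      have h3 : c * (∑ j ∈ Finset.range (0 + 1), F u ^ j / (j.factorial : ℝ))
          + M * F u ^ (0 + 1) / ((0 + 1).factorial : ℝ) = c + M * F u := by
        simp [Finset.sum_range_one]
      rw [h3]
      nlinarith [h2, h1]
    | succ k IH =>
      intro u hu
      have hsub : Ioc s u ⊆ Ioc s T := Ioc_subset_Ioc le_rfl hu.2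
      -- pointwise bound for the integrand
      have hptwise : ∀ v ∈ Ioc s u, g v * y v ≤
          c * (∑ j ∈ Finset.range (k + 1), g v * F v ^ j / (j.factorial : ℝ))
            + M * (g v * F v ^ (k + 1)) / ((k + 1).factorial : ℝ) := by
        intro v hv
        have hvI : v ∈ Icc s T := ⟨le_of_lt hv.1, hv.2.trans hu.2⟩
        have hgv : 0 ≤ g v := hg0 v (hsub hv)
        have := mul_le_mul_of_nonneg_left (IH v hvI) hgv
        calc g v * y v ≤ g v * (c * (∑ j ∈ Finset.range (k + 1), F v ^ j / (j.factorial : ℝ))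
              + M * F v ^ (k + 1) / ((k + 1).factorial : ℝ)) := this
          _ = c * (g v * (∑ j ∈ Finset.range (k + 1), F v ^ j / (j.factorial : ℝ)))
              + M * (g v * F v ^ (k + 1)) / ((k + 1).factorial : ℝ) := by ring
          _ = c * (∑ j ∈ Finset.range (k + 1), g v * F v ^ j / (j.factorial : ℝ))
              + M * (g v * F v ^ (k + 1)) / ((k + 1).factorial : ℝ) := by
            congr 1
            congr 1
            rw [Finset.mul_sum]
            exact Finset.sum_congr rfl fun j _ => by ring
      -- integrability of the majorant
      have hintj : ∀ j : ℕ, IntegrableOn (fun v => g v * F v ^ j) (Ioc s u) :=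
        fun j => int_gFk hg hFc hu j
      have hintmaj : IntegrableOn (fun v =>
          c * (∑ j ∈ Finset.range (k + 1), g v * F v ^ j / (j.factorial : ℝ))
            + M * (g v * F v ^ (k + 1)) / ((k + 1).factorial : ℝ)) (Ioc s u) := by
        refine Integrable.add ?_ ?_
        · refine Integrable.const_mul ?_ _
          refine integrable_finset_sum _ fun j _ => ?_
          exact (hintj j).div_const _
        · exact (((hintj (k + 1)).const_mul M).div_const _)
      have hfac2 : ((k + 2).factorial : ℝ) = (↑k + 2) * ((k + 1).factorial : ℝ) := by
        rw [show k + 2 = (k + 1) + 1 from rfl, Nat.factorial_succ]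
        push_cast
        ring
      have hIbound : (∫ v in Ioc s u, g v * y v) ≤
          c * (∑ j ∈ Finset.range (k + 1), F u ^ (j + 1) / ((j + 1).factorial : ℝ))
            + M * F u ^ (k + 2) / ((k + 2).factorial : ℝ) := by
        have h1 := setIntegral_mono_on (hgy.mono_set hsub) hintmaj measurableSet_Ioc hptwise
        refine le_trans h1 (le_of_eq ?_)
        rw [integral_add ((integrable_finset_sum _ fun j _ => (hintj j).div_const _).const_mul c)
            (((hintj (k + 1)).const_mul M).div_const _)]
        congr 1
        · rw [integral_const_mul, integral_finset_sum _ fun j _ => (hintj j).div_const _]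
          congr 1
          apply Finset.sum_congr rfl
          intro j _
          rw [integral_div, key_identity hg hFc j u hu,
            show (∫ v in Ioc s u, g v) = F u from rfl, Nat.factorial_succ]
          push_cast
          rw [div_div]
        · rw [integral_div, integral_const_mul, key_identity hg hFc (k + 1) u hu,
            show (∫ v in Ioc s u, g v) = F u from rfl, hfac2]
          rw [show ((((k+1) : ℕ) : ℝ) + 1) = (k : ℝ) + 2 by push_cast; ring,
            ← mul_div_assoc, div_div]
      have h2 := hle u hu
      have hsum : (∑ j ∈ Finset.range (k + 2), F u ^ j / (j.factorial : ℝ))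
          = (∑ j ∈ Finset.range (k + 1), F u ^ (j + 1) / ((j + 1).factorial : ℝ)) + 1 := by
        rw [Finset.sum_range_succ' (fun j => F u ^ j / (j.factorial : ℝ)) (k + 1)]
        norm_num
      have halg : c + (c * (∑ j ∈ Finset.range (k + 1),
            F u ^ (j + 1) / ((j + 1).factorial : ℝ))
            + M * F u ^ (k + 2) / ((k + 2).factorial : ℝ))
          = c * (∑ j ∈ Finset.range (k + 2), F u ^ j / (j.factorial : ℝ))
            + M * F u ^ (k + 2) / ((k + 2).factorial : ℝ) := by
        rw [hsum]
        ring
      calc y u ≤ c + ∫ v in Ioc s u, g v * y v := h2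
        _ ≤ c + (c * (∑ j ∈ Finset.range (k + 1),
              F u ^ (j + 1) / ((j + 1).factorial : ℝ))
              + M * F u ^ (k + 2) / ((k + 2).factorial : ℝ)) := by linarith
        _ = _ := halg
  -- pass to the limit
  have hFT0 : 0 ≤ F T := hF0 T ⟨hsT, le_rfl⟩
  have hbound : ∀ k : ℕ, y T - c * Real.exp (F T) ≤ M * (F T ^ (k + 1) / ((k + 1).factorial : ℝ)) := by
    intro k
    have h1 := main k T ⟨hsT, le_rfl⟩
    have h2 : (∑ j ∈ Finset.range (k + 1), F T ^ j / (j.factorial : ℝ)) ≤ Real.exp (F T) :=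
      Real.sum_le_exp_of_nonneg hFT0 (k + 1)
    have h3 := mul_le_mul_of_nonneg_left h2 hc
    have : M * F T ^ (k + 1) / ((k + 1).factorial : ℝ)
        = M * (F T ^ (k + 1) / ((k + 1).factorial : ℝ)) := by ring
    linarith [h1, h3, this.ge]
  have htend : Filter.Tendsto (fun k : ℕ => M * (F T ^ (k + 1) / ((k + 1).factorial : ℝ)))
      Filter.atTop (nhds 0) := by
    have h1 := FloorSemiring.tendsto_pow_div_factorial_atTop (F T)
    have h2 := (h1.comp (Filter.tendsto_add_atTop_nat 1)).const_mul M
    simpa using h2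
  have hfinal : y T - c * Real.exp (F T) ≤ 0 :=
    ge_of_tendsto htend (Filter.Eventually.of_forall hbound)
  linarith

end UGronAux2


end UGronAuxSection

section
open Set UGronAux UGronAux2

/-- The uniform Gronwall lemma (with `r = 1`): if `y' ≤ g y + h` a.e. on `[t₀, t₀+2]`
with `∫ y ≤ a₁`, `∫ g ≤ a₂`, `∫ h ≤ a₃`, and `y, g, h ≥ 0`, then
`y(t) ≤ (a₁ + a₃) e^{a₂}` for all `t ∈ [t₀+1, t₀+2]`. -/
theorem stmt16 (t₀ a₁ a₂ a₃ : ℝ) (y d g h : ℝ → ℝ)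
    (hy0 : ∀ t ∈ Set.Icc t₀ (t₀ + 2), 0 ≤ y t)
    (hg0 : ∀ t ∈ Set.Icc t₀ (t₀ + 2), 0 ≤ g t)
    (hh0 : ∀ t ∈ Set.Icc t₀ (t₀ + 2), 0 ≤ h t)
    (hd : IntervalIntegrable d volume t₀ (t₀ + 2))
    (hAC : ∀ t ∈ Set.Icc t₀ (t₀ + 2), y t = y t₀ + ∫ s in t₀..t, d s)
    (hg : IntervalIntegrable g volume t₀ (t₀ + 2))
    (hh : IntervalIntegrable h volume t₀ (t₀ + 2))
    (hineq : ∀ᵐ t ∂volume, t ∈ Set.Ioo t₀ (t₀ + 2) → d t ≤ g t * y t + h t)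
    (hy_int : (∫ s in t₀..(t₀ + 2), y s) ≤ a₁)
    (hyint : IntervalIntegrable y volume t₀ (t₀ + 2))
    (hg_int : (∫ s in t₀..(t₀ + 2), g s) ≤ a₂)
    (hh_int : (∫ s in t₀..(t₀ + 2), h s) ≤ a₃) :
    ∀ t ∈ Set.Icc (t₀ + 1) (t₀ + 2), y t ≤ (a₁ + a₃) * Real.exp a₂ := by
  have h02 : t₀ ≤ t₀ + 2 := by linarith
  have hdI : IntegrableOn d (Ioc t₀ (t₀ + 2)) :=
    (intervalIntegrable_iff_integrableOn_Ioc_of_le h02).mp hd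
  have hgI : IntegrableOn g (Ioc t₀ (t₀ + 2)) :=
    (intervalIntegrable_iff_integrableOn_Ioc_of_le h02).mp hg
  have hhI : IntegrableOn h (Ioc t₀ (t₀ + 2)) :=
    (intervalIntegrable_iff_integrableOn_Ioc_of_le h02).mp hh
  have hyI : IntegrableOn y (Ioc t₀ (t₀ + 2)) :=
    (intervalIntegrable_iff_integrableOn_Ioc_of_le h02).mp hyint
  -- continuity of y
  have hycont : ContinuousOn y (Icc t₀ (t₀ + 2)) := by
    have h1 : ContinuousOn (fun x => y t₀ + ∫ v in Ioc t₀ x, d v) (Icc t₀ (t₀ + 2)) :=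
      continuousOn_const.add
        (intervalIntegral.continuousOn_primitive ((integrableOn_Icc_iff_integrableOn_Ioc).mpr hdI))
    refine h1.congr ?_
    intro x hx
    rw [hAC x hx, intervalIntegral.integral_of_le hx.1]
  -- a uniform bound on |y| for integrability purposes
  obtain ⟨M, hMn⟩ : ∃ M, ∀ u ∈ Icc t₀ (t₀ + 2), ‖y u‖ ≤ M := by
    rcases (isCompact_Icc.image_of_continuousOn hycont).isBounded.subset_closedBall 0
      with ⟨C, hC⟩
    exact ⟨C, fun u hu => by
      simpa [dist_zero_right] using mem_closedBall_iff_norm.mp (hC ⟨u, hu, rfl⟩)⟩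
  have hgyI : IntegrableOn (fun v => g v * y v) (Ioc t₀ (t₀ + 2)) := by
    have h2 : Integrable (fun v => y v * g v) (volume.restrict (Ioc t₀ (t₀ + 2))) := by
      refine Integrable.bdd_mul (c := M) hgI
        ((hycont.mono Ioc_subset_Icc_self).aestronglyMeasurable measurableSet_Ioc) ?_
      filter_upwards [ae_restrict_mem measurableSet_Ioc] with x hx
      exact hMn x (Ioc_subset_Icc_self hx)
    exact h2.congr (Filter.Eventually.of_forall fun v => mul_comm _ _)
  set H : ℝ := ∫ v in Ioc t₀ (t₀ + 2), h v with hHdef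
  have hH0 : 0 ≤ H := setIntegral_nonneg measurableSet_Ioc
    (fun v hv => hh0 v (Ioc_subset_Icc_self hv))
  have hHa : H ≤ a₃ := by
    rw [hHdef, ← intervalIntegral.integral_of_le h02]
    exact hh_int
  intro t ht
  have ht1 : t₀ + 1 ≤ t := ht.1
  have ht2 : t ≤ t₀ + 2 := ht.2
  have hsubIoc : Ioc (t - 1) t ⊆ Ioc t₀ (t₀ + 2) :=
    Ioc_subset_Ioc (by linarith) (by linarith)
  -- the Gronwall estimate for each s ∈ (t-1, t]
  have key : ∀ s ∈ Ioc (t - 1) t, y t ≤ (y s + H) * Real.exp a₂ := by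
    intro s hs
    have hst0 : t₀ < s := by linarith [hs.1]
    have hst : s ≤ t := hs.2
    have hsIcc : s ∈ Icc t₀ (t₀ + 2) := ⟨le_of_lt hst0, by linarith⟩
    have hsubst : Ioc s t ⊆ Ioc t₀ (t₀ + 2) := Ioc_subset_Ioc (le_of_lt hst0) ht2
    have hg' : IntegrableOn g (Ioc s t) := hgI.mono_set hsubst
    have hg0' : ∀ v ∈ Ioc s t, 0 ≤ g v := fun v hv =>
      hg0 v (Ioc_subset_Icc_self (hsubst hv))
    have hc' : 0 ≤ y s + H := add_nonneg (hy0 s hsIcc) hH0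
    have hle : ∀ u ∈ Icc s t, y u ≤ (y s + H) + ∫ v in Ioc s u, g v * y v := by
      intro u hu
      have huIcc : u ∈ Icc t₀ (t₀ + 2) := ⟨by linarith [hu.1], by linarith [hu.2]⟩
      have hsu : s ≤ u := hu.1
      have hsubsu : Set.uIcc s u ⊆ Set.uIcc t₀ (t₀ + 2) := by
        rw [Set.uIcc_of_le hsu, Set.uIcc_of_le h02]
        exact Icc_subset_Icc (le_of_lt hst0) huIcc.2
      have hsubs : Set.uIcc t₀ s ⊆ Set.uIcc t₀ (t₀ + 2) := by
        rw [Set.uIcc_of_le (le_of_lt hst0), Set.uIcc_of_le h02]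
        exact Icc_subset_Icc le_rfl hsIcc.2
      have hsubu : Set.uIcc t₀ u ⊆ Set.uIcc t₀ (t₀ + 2) := by
        rw [Set.uIcc_of_le (le_of_lt hst0|>.trans hsu), Set.uIcc_of_le h02]
        exact Icc_subset_Icc le_rfl huIcc.2
      have hdiff : y u = y s + ∫ v in s..u, d v := by
        rw [hAC u huIcc, hAC s hsIcc]
        have := intervalIntegral.integral_add_adjacent_intervals
          (hd.mono_set hsubs) (hd.mono_set hsubsu)
        rw [← this]
        ring
      -- a.e. bound on (s, u]
      have h_ne : ∀ᵐ v : ℝ ∂volume, v ≠ t₀ + 2 := by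
        rw [ae_iff]
        have : {a : ℝ | ¬a ≠ t₀ + 2} = {t₀ + 2} := by
          ext a; simp
        rw [this]
        exact Real.volume_singleton
      have hgyuI : IntervalIntegrable (fun v => g v * y v + h v) volume s u := by
        refine (intervalIntegrable_iff_integrableOn_Ioc_of_le hsu).mpr ?_
        have hsubsu' : Ioc s u ⊆ Ioc t₀ (t₀ + 2) := Ioc_subset_Ioc (le_of_lt hst0)
          (by linarith [hu.2])
        exact (hgyI.mono_set hsubsu').add (hhI.mono_set hsubsu')
      have hmono : (∫ v in s..u, d v) ≤ ∫ v in s..u, (g v * y v + h v) := by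
        refine intervalIntegral.integral_mono_ae_restrict hsu (hd.mono_set hsubsu) hgyuI ?_
        filter_upwards [ae_restrict_mem measurableSet_Icc, ae_restrict_of_ae hineq,
          ae_restrict_of_ae h_ne] with v hv1 hv2 hv3
        refine hv2 ⟨by linarith [hv1.1, hst0], lt_of_le_of_ne (by linarith [hv1.2, hu.2, ht2]) hv3⟩
      have hsplit : (∫ v in s..u, (g v * y v + h v))
          = (∫ v in Ioc s u, g v * y v) + ∫ v in Ioc s u, h v := by
        rw [intervalIntegral.integral_of_le hsu]
        exact integral_add (hgyI.mono_set (Ioc_subset_Ioc (le_of_lt hst0) (by linarith [hu.2])))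
          (hhI.mono_set (Ioc_subset_Ioc (le_of_lt hst0) (by linarith [hu.2])))
      have hhle : (∫ v in Ioc s u, h v) ≤ H := by
        rw [hHdef]
        refine setIntegral_mono_set hhI ?_ ?_
        · filter_upwards [ae_restrict_mem measurableSet_Ioc] with v hv
          exact hh0 v (Ioc_subset_Icc_self hv)
        · exact HasSubset.Subset.eventuallyLE
            (Ioc_subset_Ioc (le_of_lt hst0) (by linarith [hu.2]))
      rw [hdiff]
      linarith
    have hgron := gronwall hst hc' (hycont.mono (Icc_subset_Icc (le_of_lt hst0) ht2))
      hg' hg0' hle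
    have hFle : (∫ v in Ioc s t, g v) ≤ a₂ := by
      have h1 : (∫ v in Ioc s t, g v) ≤ ∫ v in Ioc t₀ (t₀ + 2), g v := by
        refine setIntegral_mono_set hgI ?_ (HasSubset.Subset.eventuallyLE hsubst)
        filter_upwards [ae_restrict_mem measurableSet_Ioc] with v hv
        exact hg0 v (Ioc_subset_Icc_self hv)
      rw [← intervalIntegral.integral_of_le h02] at h1
      linarith
    calc y t ≤ (y s + H) * Real.exp (∫ v in Ioc s t, g v) := hgron
      _ ≤ (y s + H) * Real.exp a₂ :=
        mul_le_mul_of_nonneg_left (Real.exp_le_exp.mpr hFle) hc'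
  -- integrate the estimate over s ∈ (t-1, t]
  have hvol : volume (Ioc (t - 1) t) = 1 := by
    rw [Real.volume_Ioc]
    norm_num
  have hconst : (∫ _ in Ioc (t - 1) t, y t) = y t := by
    rw [setIntegral_const, Measure.real, hvol]
    simp
  have hyI' : IntegrableOn y (Ioc (t - 1) t) := hyI.mono_set hsubIoc
  have hmono2 : (∫ _ in Ioc (t - 1) t, y t)
      ≤ ∫ s in Ioc (t - 1) t, (y s + H) * Real.exp a₂ := by
    refine setIntegral_mono_on ?_ ?_ measurableSet_Ioc key
    · exact integrableOn_const (by rw [hvol]; norm_num)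
    · exact (hyI'.add (integrableOn_const (by rw [hvol]; norm_num))).mul_const _
  have hcomp : (∫ s in Ioc (t - 1) t, (y s + H) * Real.exp a₂)
      = ((∫ s in Ioc (t - 1) t, y s) + H) * Real.exp a₂ := by
    rw [integral_mul_const]
    congr 1
    rw [integral_add hyI' (integrableOn_const (by rw [hvol]; norm_num)),
      setIntegral_const, Measure.real, hvol]
    simp
  have hyle : (∫ s in Ioc (t - 1) t, y s) ≤ a₁ := by
    have h1 : (∫ s in Ioc (t - 1) t, y s) ≤ ∫ s in Ioc t₀ (t₀ + 2), y s := by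
      refine setIntegral_mono_set hyI ?_ (HasSubset.Subset.eventuallyLE hsubIoc)
      filter_upwards [ae_restrict_mem measurableSet_Ioc] with v hv
      exact hy0 v (Ioc_subset_Icc_self hv)
    rw [← intervalIntegral.integral_of_le h02] at h1
    linarith
  calc y t = ∫ _ in Ioc (t - 1) t, y t := hconst.symm
    _ ≤ ((∫ s in Ioc (t - 1) t, y s) + H) * Real.exp a₂ := by rw [← hcomp]; exact hmono2
    _ ≤ (a₁ + a₃) * Real.exp a₂ :=
      mul_le_mul_of_nonneg_right (add_le_add hyle hHa) (Real.exp_nonneg _)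

end
end
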